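/- For every x ∈ ℝ^d one has f(x) ≤ g^A(x) ≤ f(x) + (√A·L²/2)·‖σ‖_op, where ‖σ‖_op denotes the operator norm of σ; in particular the supremum defining g^A(x) is finite for every x. -/

import Mathlib

open MeasureTheory ProbabilityTheory Matrix Filter

noncomputable section

/-- Euclidean inner product on row vectors in `ℝ^d`. -/
def euclInner {d : ℕ} (x y : Fin d → ℝ) : ℝ := ∑ i, x i * y i

/-- Euclidean norm on row vectors in `ℝ^d`. -/
def euclNorm {d : ℕ} (x : Fin d → ℝ) : ℝ := Real.sqrt (∑ i, (x i) ^ 2)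

/-- `g^A(x) := sup_y [ f(x+y) − ⟨yσ⁻¹, y⟩/(2√A) ]`. -/
def gA {d : ℕ} (A : ℝ) (σ : Matrix (Fin d) (Fin d) ℝ) (f : (Fin d → ℝ) → ℝ)
    (x : Fin d → ℝ) : ℝ :=
  sSup {r | ∃ y : Fin d → ℝ, r = f (x + y) - euclInner (y ᵥ* σ⁻¹) y / (2 * Real.sqrt A)}

/-- Operator norm of `σ` acting on row vectors, w.r.t. the Euclidean norm. -/
def opNormM {d : ℕ} (σ : Matrix (Fin d) (Fin d) ℝ) : ℝ :=
  sSup {r | ∃ x : Fin d → ℝ, euclNorm x ≤ 1 ∧ r = euclNorm (x ᵥ* σ)}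

lemma euclInner_eq_dot {d : ℕ} (x y : Fin d → ℝ) : euclInner x y = x ⬝ᵥ y := rfl

lemma euclNorm_nonneg {d : ℕ} (x : Fin d → ℝ) : 0 ≤ euclNorm x := Real.sqrt_nonneg _

lemma euclNorm_sq {d : ℕ} (x : Fin d → ℝ) : euclNorm x ^ 2 = euclInner x x := by
  rw [euclNorm, Real.sq_sqrt (by positivity), euclInner]
  exact Finset.sum_congr rfl fun i _ => (sq (x i))

lemma euclInner_comm {d : ℕ} (x y : Fin d → ℝ) : euclInner x y = euclInner y x := by
  simp [euclInner, mul_comm]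

lemma euclInner_CS {d : ℕ} (x y : Fin d → ℝ) :
    (euclInner x y) ^ 2 ≤ euclInner x x * euclInner y y := by
  have h := Finset.sum_mul_sq_le_sq_mul_sq Finset.univ x y
  simpa [euclInner, ← sq] using h

lemma euclInner_le {d : ℕ} (x y : Fin d → ℝ) :
    euclInner x y ≤ euclNorm x * euclNorm y := by
  have h := euclInner_CS x y
  rw [← euclNorm_sq, ← euclNorm_sq] at h
  nlinarith [euclNorm_nonneg x, euclNorm_nonneg y, sq_nonneg (euclNorm x * euclNorm y - euclInner x y), mul_nonneg (euclNorm_nonneg x) (euclNorm_nonneg y)]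

lemma euclNorm_smul {d : ℕ} (c : ℝ) (x : Fin d → ℝ) :
    euclNorm (c • x) = |c| * euclNorm x := by
  simp only [euclNorm, Pi.smul_apply, smul_eq_mul, mul_pow, ← Finset.mul_sum]
  rw [Real.sqrt_mul (sq_nonneg c), Real.sqrt_sq_eq_abs]

/-- move a symmetric matrix across the euclidean inner product -/
lemma euclInner_vecMul_symm {d : ℕ} {t : Matrix (Fin d) (Fin d) ℝ}
    (ht : ∀ i j, t i j = t j i) (w b : Fin d → ℝ) :
    euclInner (w ᵥ* t) b = euclInner w (b ᵥ* t) := by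
  simp only [euclInner, vecMul, dotProduct, Finset.sum_mul, Finset.mul_sum]
  rw [Finset.sum_comm]
  exact Finset.sum_congr rfl fun i _ => Finset.sum_congr rfl fun j _ => by rw [ht j i]; ring


section Main
variable {d : ℕ} (σ : Matrix (Fin d) (Fin d) ℝ)

def opSet : Set ℝ := {r | ∃ x : Fin d → ℝ, euclNorm x ≤ 1 ∧ r = euclNorm (x ᵥ* σ)}

lemma opSet_bdd : BddAbove (opSet σ) := by
  refine ⟨Real.sqrt (∑ i, ∑ j, (σ i j) ^ 2), ?_⟩
  rintro r ⟨x, hx, rfl⟩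
  apply Real.sqrt_le_sqrt
  have hx2 : ∑ i, (x i) ^ 2 ≤ 1 := by
    have := euclNorm_sq x
    have h1 : euclNorm x ^ 2 ≤ 1 := by nlinarith [euclNorm_nonneg x]
    rw [euclNorm_sq, euclInner] at h1
    calc ∑ i, (x i)^2 = ∑ i, x i * x i := by
          exact Finset.sum_congr rfl fun i _ => sq (x i)
      _ ≤ 1 := h1
  calc ∑ j, (vecMul x σ j) ^ 2
      ≤ ∑ j, (∑ i, (x i)^2) * (∑ i, (σ i j)^2) := by
        apply Finset.sum_le_sum
        intro j _
        exact Finset.sum_mul_sq_le_sq_mul_sq Finset.univ x (fun i => σ i j)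
    _ ≤ ∑ j, ∑ i, (σ i j)^2 := by
        apply Finset.sum_le_sum
        intro j _
        have h2 : (0:ℝ) ≤ ∑ i, (σ i j)^2 := by positivity
        nlinarith
    _ = ∑ i, ∑ j, (σ i j)^2 := Finset.sum_comm

lemma opSet_zero_mem : (0:ℝ) ∈ opSet σ := by
  refine ⟨0, ?_, ?_⟩ <;> simp [euclNorm, zero_vecMul]

lemma opNorm_bound (y : Fin d → ℝ) :
    euclNorm (y ᵥ* σ) ≤ sSup (opSet σ) * euclNorm y := by
  by_cases hy : y = 0
  · subst hy
    simp only [zero_vecMul]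
    have : euclNorm (0 : Fin d → ℝ) = 0 := by simp [euclNorm]
    rw [this, mul_zero]
  · have hn : 0 < euclNorm y := by
      rcases lt_or_eq_of_le (euclNorm_nonneg y) with h | h
      · exact h
      · exfalso; apply hy
        have h0 : ∑ i, (y i)^2 = 0 := by
          have := Real.sqrt_eq_zero (by positivity : (0:ℝ) ≤ ∑ i, (y i)^2) |>.mp h.symm
          exact this
        funext i
        have := (Finset.sum_eq_zero_iff_of_nonneg (fun i _ => sq_nonneg (y i))).mp h0 i
          (Finset.mem_univ i)
        exact pow_eq_zero_iff (n := 2) (by norm_num) |>.mp this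
    set n := euclNorm y with hn'
    have hu : euclNorm ((n⁻¹ • y) ᵥ* σ) ∈ opSet σ := by
      refine ⟨n⁻¹ • y, ?_, rfl⟩
      rw [euclNorm_smul, abs_of_nonneg (by positivity)]
      rw [inv_mul_cancel₀ hn.ne']
    have h1 : euclNorm ((n⁻¹ • y) ᵥ* σ) ≤ sSup (opSet σ) := le_csSup (opSet_bdd σ) hu
    have h2 : y = n • (n⁻¹ • y) := by
      rw [smul_smul, mul_inv_cancel₀ hn.ne', one_smul]
    calc euclNorm (y ᵥ* σ) = euclNorm ((n • (n⁻¹ • y)) ᵥ* σ) := by rw [← h2]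
      _ = |n| * euclNorm ((n⁻¹ • y) ᵥ* σ) := by rw [smul_vecMul, euclNorm_smul]
      _ = euclNorm ((n⁻¹ • y) ᵥ* σ) * n := by rw [abs_of_nonneg hn.le]; ring
      _ ≤ sSup (opSet σ) * n := by
          apply mul_le_mul_of_nonneg_right h1 hn.le

end Main

section PD
variable {d : ℕ} {σ : Matrix (Fin d) (Fin d) ℝ} (hσ : σ.PosDef)

include hσ in
open scoped MatrixOrder in
lemma CS_form (a b : Fin d → ℝ) :
    (euclInner (a ᵥ* σ) b) ^ 2 ≤ euclInner (a ᵥ* σ) a * euclInner (b ᵥ* σ) b := by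
  set t := CFC.sqrt σ with ht
  have htt : t * t = σ := CFC.sqrt_mul_sqrt_self σ hσ.posSemidef.nonneg
  have hts : ∀ i j, t i j = t j i := by
    intro i j
    have := (CFC.sqrt_nonneg σ).posSemidef.isHermitian
    have h := congrFun (congrFun this.eq j) i
    simpa [ht, conjTranspose_apply] using h
  have key : ∀ w : Fin d → ℝ, w ᵥ* σ = (w ᵥ* t) ᵥ* t := fun w => by
    rw [vecMul_vecMul, htt]
  have e1 : euclInner (a ᵥ* σ) b = euclInner (a ᵥ* t) (b ᵥ* t) := by
    rw [key, euclInner_vecMul_symm hts]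
  have e2 : euclInner (a ᵥ* σ) a = euclInner (a ᵥ* t) (a ᵥ* t) := by
    rw [key, euclInner_vecMul_symm hts]
  have e3 : euclInner (b ᵥ* σ) b = euclInner (b ᵥ* t) (b ᵥ* t) := by
    rw [key, euclInner_vecMul_symm hts]
  rw [e1, e2, e3]
  exact euclInner_CS _ _

include hσ in
lemma Q_nonneg (y : Fin d → ℝ) : 0 ≤ euclInner (y ᵥ* σ⁻¹) y := by
  have h := hσ.inv.posSemidef.dotProduct_mulVec_nonneg y
  rw [show star y = y from by simp] at h
  rw [euclInner_eq_dot, ← dotProduct_mulVec]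
  exact h

include hσ in
lemma key_ineq (y : Fin d → ℝ) :
    euclNorm y ^ 2 ≤ euclInner (y ᵥ* σ⁻¹) y * sSup (opSet σ) := by
  set Q := euclInner (y ᵥ* σ⁻¹) y with hQ
  set S := sSup (opSet σ) with hS
  set n := euclNorm y with hn
  have hS0 : 0 ≤ S := le_csSup (opSet_bdd σ) (opSet_zero_mem σ)
  have hQ0 : 0 ≤ Q := Q_nonneg hσ y
  -- u σ = y where u = y σ⁻¹
  have hinvmul : σ⁻¹ * σ = 1 := nonsing_inv_mul σ (isUnit_iff_isUnit_det σ |>.mp hσ.isUnit)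
  have husig : (y ᵥ* σ⁻¹) ᵥ* σ = y := by rw [vecMul_vecMul, hinvmul, vecMul_one]
  have hB : euclInner ((y ᵥ* σ⁻¹) ᵥ* σ) y = n ^ 2 := by rw [husig, ← euclNorm_sq]
  have hcs := CS_form hσ (y ᵥ* σ⁻¹) y
  rw [hB, husig] at hcs
  -- hcs : (n^2)^2 ≤ euclInner y (y ᵥ* σ⁻¹) * euclInner (y ᵥ* σ) y
  have hQ' : euclInner y (y ᵥ* σ⁻¹) = Q := euclInner_comm _ _
  rw [hQ'] at hcs
  have hBy : euclInner (y ᵥ* σ) y ≤ S * n ^ 2 := by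
    calc euclInner (y ᵥ* σ) y ≤ euclNorm (y ᵥ* σ) * euclNorm y := euclInner_le _ _
      _ ≤ (S * n) * n := mul_le_mul_of_nonneg_right (opNorm_bound σ y) (euclNorm_nonneg y)
      _ = S * n ^ 2 := by ring
  have hn0 : 0 ≤ n := euclNorm_nonneg y
  rcases eq_or_lt_of_le hn0 with h | h
  · nlinarith
  · have h1 : Q * euclInner (y ᵥ* σ) y ≤ Q * (S * n ^ 2) :=
      mul_le_mul_of_nonneg_left hBy hQ0
    have h2 : n ^ 2 * n ^ 2 ≤ (Q * S) * n ^ 2 := by nlinarith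
    have h3 : (0:ℝ) < n ^ 2 := by positivity
    exact le_of_mul_le_mul_right h2 h3
end PD

/-- For every `x`, `f(x) ≤ g^A(x) ≤ f(x) + (√A·L²/2)·‖σ‖_op`; in particular the
supremum defining `g^A(x)` is finite (the set is nonempty and bounded above). -/
theorem stmt0 {d : ℕ} (hd : 1 ≤ d) (σ : Matrix (Fin d) (Fin d) ℝ) (hσ : σ.PosDef)
    (A : ℝ) (hA : 0 < A) (L : ℝ) (f : (Fin d → ℝ) → ℝ)
    (hf : ∀ x y, |f x - f y| ≤ L * euclNorm (x - y)) :
    ∀ x : Fin d → ℝ,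
      BddAbove {r | ∃ y : Fin d → ℝ,
          r = f (x + y) - euclInner (y ᵥ* σ⁻¹) y / (2 * Real.sqrt A)} ∧
      f x ≤ gA A σ f x ∧
      gA A σ f x ≤ f x + (Real.sqrt A * L ^ 2 / 2) * opNormM σ := by
  set s := Real.sqrt A with hsdef
  have hs : 0 < s := Real.sqrt_pos.mpr hA
  set S := sSup (opSet σ) with hSdef
  have hS0 : 0 ≤ S := le_csSup (opSet_bdd σ) (opSet_zero_mem σ)
  -- L is nonnegative
  have hL : 0 ≤ L := by
    have e : Fin d := ⟨0, hd⟩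
    have h := hf (Pi.single e 1) 0
    have hsum : (∑ i, ((Pi.single e 1 : Fin d → ℝ) i) ^ 2) = 1 := by
      rw [Finset.sum_eq_single e]
      · simp
      · intro b _ hb; simp [Pi.single_apply, hb]
      · intro hb; exact absurd (Finset.mem_univ e) hb
    have hnorm : euclNorm ((Pi.single e 1 : Fin d → ℝ) - 0) = 1 := by
      rw [sub_zero, euclNorm, hsum, Real.sqrt_one]
    rw [hnorm, mul_one] at h
    exact le_trans (abs_nonneg _) h
  intro x
  -- the per-element upper bound
  have hub : ∀ r ∈ {r | ∃ y : Fin d → ℝ,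
      r = f (x + y) - euclInner (y ᵥ* σ⁻¹) y / (2 * s)},
      r ≤ f x + (s * L ^ 2 / 2) * S := by
    rintro r ⟨y, rfl⟩
    set n := euclNorm y with hn
    set Q := euclInner (y ᵥ* σ⁻¹) y with hQ
    have hn0 : 0 ≤ n := euclNorm_nonneg y
    have hkey : n ^ 2 ≤ Q * S := key_ineq hσ y
    have hQ0 : 0 ≤ Q := Q_nonneg hσ y
    have hfxy : f (x + y) ≤ f x + L * n := by
      have h := hf (x + y) x
      have : x + y - x = y := by abel
      rw [this, ← hn] at h
      have := abs_le.mp (abs_abs (f (x+y) - f x) ▸ h)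
      have h2 := le_of_abs_le h
      linarith
    have hgoal : L * n - Q / (2 * s) ≤ s * L ^ 2 / 2 * S := by
      rcases eq_or_lt_of_le hn0 with h0 | h0
      · have h1 : 0 ≤ Q / (2 * s) := by positivity
        have h2 : 0 ≤ s * L ^ 2 / 2 * S := mul_nonneg (by positivity) hS0
        rw [← h0]
        linarith
      · have hS : 0 < S := by
          by_contra hc
          push_neg at hc
          have : Q * S ≤ 0 := mul_nonpos_of_nonneg_of_nonpos hQ0 hc
          nlinarith
        have hG : 0 ≤ (s * L ^ 2 / 2 * S - (L * n - Q / (2 * s))) * (2 * s * S) := by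
          have hexp : (s * L ^ 2 / 2 * S - (L * n - Q / (2 * s))) * (2 * s * S)
              = s ^ 2 * L ^ 2 * S ^ 2 - 2 * s * S * L * n + Q * S := by
            field_simp
            ring
          rw [hexp]
          nlinarith [sq_nonneg (s * L * S - n)]
        nlinarith [mul_pos (mul_pos (by norm_num : (0:ℝ) < 2) hs) hS]
    linarith
  have h0mem : f x ∈ {r | ∃ y : Fin d → ℝ,
      r = f (x + y) - euclInner (y ᵥ* σ⁻¹) y / (2 * s)} := by
    exact ⟨0, by simp [zero_vecMul, euclInner]⟩
  have hbdd : BddAbove {r | ∃ y : Fin d → ℝ,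
      r = f (x + y) - euclInner (y ᵥ* σ⁻¹) y / (2 * s)} :=
    ⟨f x + (s * L ^ 2 / 2) * S, hub⟩
  refine ⟨hbdd, le_csSup hbdd h0mem, csSup_le ⟨f x, h0mem⟩ hub⟩
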